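/- Let P be a probability measure on a measurable space 𝒴, let E ⊆ 𝒴 be a measurable event, and let α̂ : 𝒴 → (0,1] be a measurable function whose range is countable. Suppose the Kiefer-type conditional coverage guarantee holds: for every α in the range of α̂, P(E ∩ {α̂ = α}) ≤ α · P(α̂ = α). Then the Vovk-type guarantee holds: E_P[ 1_E / α̂ ] ≤ 1. (Applied with E = {θ ∉ CI(Y)} for each θ, this shows that every Kiefer-type conditional frequentist confidence set estimator with countable partition is a Vovk-type confidence set estimator, and hence that S := 1_{θ∉CI(Y)}/α̂(Y) is an e-variable.) -/

import Mathlib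

open MeasureTheory ENNReal

/-- Vovk's (1993) implication: every Kiefer-type conditional frequentist coverage
guarantee (over a countable partition induced by `α̂`) implies the Vovk-type
guarantee `E_P[ 1_E / α̂ ] ≤ 1`. -/
theorem kiefer_implies_vovk
    {𝒴 : Type*} [MeasurableSpace 𝒴]
    (P : Measure 𝒴) [IsProbabilityMeasure P]
    (E : Set 𝒴) (hE : MeasurableSet E)
    (αhat : 𝒴 → ℝ)
    (hαhat_meas : Measurable αhat)
    (hαhat_range : ∀ y, αhat y ∈ Set.Ioc (0 : ℝ) 1)
    (hcountable : (Set.range αhat).Countable)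
    -- the Kiefer-type conditional coverage guarantee
    (hkiefer : ∀ α ∈ Set.range αhat,
      P (E ∩ αhat ⁻¹' {α}) ≤ ENNReal.ofReal α * P (αhat ⁻¹' {α})) :
    ∫⁻ y in E, (ENNReal.ofReal (αhat y))⁻¹ ∂P ≤ 1 := by
  haveI := hcountable.to_subtype
  have hmeas : ∀ α : ℝ, MeasurableSet (αhat ⁻¹' {α}) :=
    fun α => hαhat_meas (measurableSet_singleton α)
  have hEeq : E = ⋃ α : Set.range αhat, E ∩ αhat ⁻¹' {(α : ℝ)} := by
    ext y
    simp only [Set.mem_iUnion, Set.mem_inter_iff, Set.mem_preimage,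
      Set.mem_singleton_iff]
    constructor
    · intro hy; exact ⟨⟨αhat y, Set.mem_range_self y⟩, hy, rfl⟩
    · rintro ⟨_, hy, _⟩; exact hy
  have hdisj : Pairwise (Function.onFun Disjoint
      fun α : Set.range αhat => E ∩ αhat ⁻¹' {(α : ℝ)}) := by
    intro a b hab
    refine Set.disjoint_left.mpr ?_
    rintro y ⟨-, hya⟩ ⟨-, hyb⟩
    exact hab (Subtype.ext (hya.symm.trans hyb))
  rw [hEeq, lintegral_iUnion (fun α => hE.inter (hmeas _)) hdisj]
  have key : ∀ α : Set.range αhat,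
      ∫⁻ y in E ∩ αhat ⁻¹' {(α : ℝ)}, (ENNReal.ofReal (αhat y))⁻¹ ∂P
        ≤ P (αhat ⁻¹' {(α : ℝ)}) := by
    rintro ⟨α, y₀, hy₀⟩
    have hαpos : 0 < α := hy₀ ▸ (hαhat_range y₀).1
    have hconst : ∀ y ∈ E ∩ αhat ⁻¹' {α},
        (ENNReal.ofReal (αhat y))⁻¹ = (ENNReal.ofReal α)⁻¹ := by
      rintro y ⟨-, hy⟩
      simp only [Set.mem_preimage, Set.mem_singleton_iff] at hy
      rw [hy]
    rw [setLIntegral_congr_fun (hE.inter (hmeas _)) (fun y hy => hconst y hy),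
      setLIntegral_const]
    calc (ENNReal.ofReal α)⁻¹ * P (E ∩ αhat ⁻¹' {α})
        ≤ (ENNReal.ofReal α)⁻¹ * (ENNReal.ofReal α * P (αhat ⁻¹' {α})) :=
          mul_le_mul_right (hkiefer α ⟨y₀, hy₀⟩) _
      _ = P (αhat ⁻¹' {α}) := by
          rw [← mul_assoc, ENNReal.inv_mul_cancel
            (ENNReal.ofReal_pos.mpr hαpos).ne' ENNReal.ofReal_ne_top, one_mul]
  calc ∑' α : Set.range αhat,
        ∫⁻ y in E ∩ αhat ⁻¹' {(α : ℝ)}, (ENNReal.ofReal (αhat y))⁻¹ ∂P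
      ≤ ∑' α : Set.range αhat, P (αhat ⁻¹' {(α : ℝ)}) :=
        ENNReal.tsum_le_tsum key
    _ = P (⋃ α : Set.range αhat, αhat ⁻¹' {(α : ℝ)}) := by
        refine (measure_iUnion ?_ fun α => hmeas _).symm
        intro a b hab
        refine Set.disjoint_left.mpr ?_
        rintro y hya hyb
        exact hab (Subtype.ext (hya.symm.trans hyb))
    _ ≤ 1 := prob_le_one
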